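/- Projection formulation of the Kochen-Specker Theorem: Let H be a finite-dimensional complex Hilbert space with dim(H) > 2. Then there is no function w assigning to every orthogonal projection P on H a value w(P) ∈ {0,1} such that for every finite family of mutually orthogonal projections P₁, …, Pₙ with P₁ + ⋯ + Pₙ = 1 (the identity operator), exactly one of the values w(P₁), …, w(Pₙ) equals 1. (This is the form of the theorem expressing that projection operators, interpreted as properties, cannot all be assigned simultaneous definite truth values.) -/

import Mathlib

open scoped InnerProductSpace ComplexConjugate

namespace KSProof

set_option linter.unusedSectionVars false
variable {H : Type*} [NormedAddCommGroup H] [InnerProductSpace ℂ H] [FiniteDimensional ℂ H]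

noncomputable def pr (v : H) : H →L[ℂ] H := (innerSL ℂ v).smulRight v

lemma pr_apply (v x : H) : pr v x = ⟪v, x⟫_ℂ • v := rfl

lemma pr_sa (v : H) : IsSelfAdjoint (pr v) := by
  rw [ContinuousLinearMap.isSelfAdjoint_iff_isSymmetric]
  intro x y
  simp [pr_apply, inner_smul_left, inner_smul_right, mul_comm]

lemma pr_idem (v : H) (hv : ‖v‖ = 1) : pr v * pr v = pr v := by
  ext x
  have : ⟪v, v⟫_ℂ = 1 := by
    rw [inner_self_eq_norm_sq_to_K, hv]; norm_num
  simp [ContinuousLinearMap.mul_apply, pr_apply, inner_smul_right, this, hv]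

lemma pr_orth {u v : H} (h : ⟪u, v⟫_ℂ = 0) : pr u * pr v = 0 := by
  ext x
  simp [ContinuousLinearMap.mul_apply, pr_apply, inner_smul_right, h]

lemma pr_sum {n : ℕ} (hn0 : 0 < n) (u : Fin n → H) (hu : Orthonormal ℂ u)
    (hn : n = Module.finrank ℂ H) : ∑ i, pr (u i) = 1 := by
  have hne : Nonempty (Fin n) := ⟨⟨0, hn0⟩⟩
  have hcard : Fintype.card (Fin n) = Module.finrank ℂ H := by simp [hn]
  have hcoe : (basisOfOrthonormalOfCardEqFinrank hu hcard : Fin n → H) = u :=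
    coe_basisOfOrthonormalOfCardEqFinrank hu hcard
  have hsp : ⊤ ≤ Submodule.span ℂ (Set.range u) := by
    rw [← hcoe, ← (basisOfOrthonormalOfCardEqFinrank hu hcard).span_eq]
  set b : OrthonormalBasis (Fin n) ℂ H := OrthonormalBasis.mk hu hsp
  have hbu : ∀ i, b i = u i := fun i => by simp [b, OrthonormalBasis.coe_mk]
  ext x
  have := b.sum_repr' x
  simp only [hbu] at this
  simpa [ContinuousLinearMap.sum_apply, pr_apply] using this




noncomputable def nv (x : H) : H := ((‖x‖⁻¹ : ℝ) : ℂ) • x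

lemma nv_norm (x : H) (hx : x ≠ 0) : ‖nv x‖ = 1 := by
  simpa [nv] using norm_smul_inv_norm (𝕜 := ℂ) hx

lemma nv_inner_self (x : H) (hx : x ≠ 0) : ⟪nv x, nv x⟫_ℂ = 1 := by
  rw [inner_self_eq_norm_sq_to_K, nv_norm x hx]; norm_num

lemma nv_inner_left (x y : H) : ⟪nv x, y⟫_ℂ = ((‖x‖⁻¹ : ℝ) : ℂ) * ⟪x, y⟫_ℂ := by
  simp [nv, inner_smul_left, Complex.conj_ofReal, mul_comm]

lemma nv_inner (x y : H) : ⟪nv x, nv y⟫_ℂ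
    = ((‖x‖⁻¹ : ℝ) : ℂ) * ((‖y‖⁻¹ : ℝ) : ℂ) * ⟪x, y⟫_ℂ := by
  simp [nv, inner_smul_left, inner_smul_right, Complex.conj_ofReal]; ring

lemma nv_one (x : H) (hx : ‖x‖ = 1) : nv x = x := by
  simp [nv, hx]

lemma orthonormal_three (x y z : H) (hx : x ≠ 0) (hy : y ≠ 0) (hz : z ≠ 0)
    (hxy : ⟪x, y⟫_ℂ = 0) (hxz : ⟪x, z⟫_ℂ = 0) (hyz : ⟪y, z⟫_ℂ = 0) :
    Orthonormal ℂ ![nv x, nv y, nv z] := by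
  rw [orthonormal_iff_ite]
  have hyx : ⟪y, x⟫_ℂ = 0 := by rwa [inner_eq_zero_symm] at hxy
  have hzx : ⟪z, x⟫_ℂ = 0 := by rwa [inner_eq_zero_symm] at hxz
  have hzy : ⟪z, y⟫_ℂ = 0 := by rwa [inner_eq_zero_symm] at hyz
  intro i j
  fin_cases i <;> fin_cases j <;>
    simp [nv_inner_self, nv_norm, hx, hy, hz, nv_inner, hxy, hxz, hyz, hyx, hzx, hzy]

variable {n : ℕ}

lemma orthonormal_extend (e : OrthonormalBasis (Fin n) ℂ H) (v : Fin 3 → H)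
    (hv : Orthonormal ℂ v) (hvt : ∀ (j : Fin 3) (k : Fin n), 3 ≤ (k : ℕ) → ⟪v j, e k⟫_ℂ = 0) :
    Orthonormal ℂ (fun i : Fin n => if h : (i : ℕ) < 3 then v ⟨i, h⟩ else e i) := by
  rw [orthonormal_iff_ite]
  have hv' := orthonormal_iff_ite.mp hv
  have he' := orthonormal_iff_ite.mp e.orthonormal
  intro i j
  by_cases hi : (i : ℕ) < 3 <;> by_cases hj : (j : ℕ) < 3
  · have := hv' ⟨i, hi⟩ ⟨j, hj⟩
    simp only [dif_pos hi, dif_pos hj, this]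
    congr 1
    simp [Fin.ext_iff]
  · have := hvt ⟨i, hi⟩ j (by omega)
    have hij : i ≠ j := by intro h; subst h; omega
    simp [dif_pos hi, dif_neg hj, this, hij]
  · have := hvt ⟨j, hj⟩ i (by omega)
    have hij : i ≠ j := by intro h; subst h; omega
    have : ⟪e i, v ⟨j, hj⟩⟫_ℂ = 0 := by rwa [inner_eq_zero_symm] at this
    simp [dif_neg hi, dif_pos hj, this, hij]
  · simp only [dif_neg hi, dif_neg hj, he' i j]

lemma triple_rule (w : (H →L[ℂ] H) → ℝ)
    (hres : ∀ (m : ℕ) (P : Fin m → (H →L[ℂ] H)),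
      (∀ i, IsSelfAdjoint (P i)) → (∀ i, P i * P i = P i) →
      (∀ i j, i ≠ j → P i * P j = 0) → (∑ i, P i = 1) → ∃! i, w (P i) = 1)
    (hn : n = Module.finrank ℂ H) (h3 : 3 ≤ n)
    (e : OrthonormalBasis (Fin n) ℂ H)
    (htail : ∀ k : Fin n, 3 ≤ (k : ℕ) → w (pr (e k)) ≠ 1)
    (x y z : H) (hx : x ≠ 0) (hy : y ≠ 0) (hz : z ≠ 0)
    (hxy : ⟪x, y⟫_ℂ = 0) (hxz : ⟪x, z⟫_ℂ = 0) (hyz : ⟪y, z⟫_ℂ = 0)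
    (hxt : ∀ k : Fin n, 3 ≤ (k : ℕ) → ⟪x, e k⟫_ℂ = 0)
    (hyt : ∀ k : Fin n, 3 ≤ (k : ℕ) → ⟪y, e k⟫_ℂ = 0)
    (hzt : ∀ k : Fin n, 3 ≤ (k : ℕ) → ⟪z, e k⟫_ℂ = 0) :
    (w (pr (nv x)) = 1 ∨ w (pr (nv y)) = 1 ∨ w (pr (nv z)) = 1) ∧
    ¬(w (pr (nv x)) = 1 ∧ w (pr (nv y)) = 1) ∧
    ¬(w (pr (nv x)) = 1 ∧ w (pr (nv z)) = 1) ∧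
    ¬(w (pr (nv y)) = 1 ∧ w (pr (nv z)) = 1) := by
  classical
  set v : Fin 3 → H := ![nv x, nv y, nv z] with hvdef
  have hv : Orthonormal ℂ v := orthonormal_three x y z hx hy hz hxy hxz hyz
  have hvt : ∀ (j : Fin 3) (k : Fin n), 3 ≤ (k : ℕ) → ⟪v j, e k⟫_ℂ = 0 := by
    intro j k hk
    fin_cases j <;>
      simp [hvdef, nv_inner_left, hxt k hk, hyt k hk, hzt k hk]
  set u : Fin n → H := fun i => if h : (i : ℕ) < 3 then v ⟨i, h⟩ else e i with hudef
  have hu : Orthonormal ℂ u := orthonormal_extend e v hv hvt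
  obtain ⟨j0, hj0, hun⟩ := hres n (fun i => pr (u i))
    (fun i => pr_sa (u i)) (fun i => pr_idem (u i) (hu.1 i))
    (fun i j hij => pr_orth (hu.2 hij)) (pr_sum (by omega) u hu hn)
  have hu0 : ∀ (h : (0:ℕ) < n), u ⟨0, h⟩ = nv x := fun h => by simp [hudef, hvdef]
  have hu1 : ∀ (h : (1:ℕ) < n), u ⟨1, h⟩ = nv y := fun h => by
    simp only [hudef]; rw [dif_pos (by norm_num)]; rfl
  have hu2 : ∀ (h : (2:ℕ) < n), u ⟨2, h⟩ = nv z := fun h => by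
    simp only [hudef]; rw [dif_pos (by norm_num)]; rfl
  have hj0lt : (j0 : ℕ) < 3 := by
    by_contra hge
    have hue : u j0 = e j0 := by simp [hudef, dif_neg, hge]
    exact htail j0 (by omega) (by rwa [← hue])
  refine ⟨?_, ?_, ?_, ?_⟩
  · have h012 : (j0 : ℕ) = 0 ∨ (j0 : ℕ) = 1 ∨ (j0 : ℕ) = 2 := by omega
    rcases h012 with h | h | h
    · left; have : j0 = ⟨0, by omega⟩ := by simp [Fin.ext_iff, h]
      rwa [this, hu0] at hj0
    · right; left; have : j0 = ⟨1, by omega⟩ := by simp [Fin.ext_iff, h]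
      rwa [this, hu1] at hj0
    · right; right; have : j0 = ⟨2, by omega⟩ := by simp [Fin.ext_iff, h]
      rwa [this, hu2] at hj0
  · rintro ⟨hA, hB⟩
    have e0 := hun ⟨0, by omega⟩ (show w (pr (u ⟨0, by omega⟩)) = 1 by rw [hu0]; exact hA)
    have e1 := hun ⟨1, by omega⟩ (show w (pr (u ⟨1, by omega⟩)) = 1 by rw [hu1]; exact hB)
    rw [← e1] at e0; exact absurd e0 (by simp [Fin.ext_iff])
  · rintro ⟨hA, hB⟩
    have e0 := hun ⟨0, by omega⟩ (show w (pr (u ⟨0, by omega⟩)) = 1 by rw [hu0]; exact hA)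
    have e1 := hun ⟨2, by omega⟩ (show w (pr (u ⟨2, by omega⟩)) = 1 by rw [hu2]; exact hB)
    rw [← e1] at e0; exact absurd e0 (by simp [Fin.ext_iff])
  · rintro ⟨hA, hB⟩
    have e0 := hun ⟨1, by omega⟩ (show w (pr (u ⟨1, by omega⟩)) = 1 by rw [hu1]; exact hA)
    have e1 := hun ⟨2, by omega⟩ (show w (pr (u ⟨2, by omega⟩)) = 1 by rw [hu2]; exact hB)
    rw [← e1] at e0; exact absurd e0 (by simp [Fin.ext_iff])



noncomputable def emb (e : OrthonormalBasis (Fin n) ℂ H) (h3 : 3 ≤ n) (a b c : ℝ) : H :=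
  (a : ℂ) • e ⟨0, by omega⟩ + (b : ℂ) • e ⟨1, by omega⟩ + (c : ℂ) • e ⟨2, by omega⟩

lemma emb_inner (e : OrthonormalBasis (Fin n) ℂ H) (h3 : 3 ≤ n) (a b c a' b' c' : ℝ) :
    ⟪emb e h3 a b c, emb e h3 a' b' c'⟫_ℂ = ((a * a' + b * b' + c * c' : ℝ) : ℂ) := by
  have he := orthonormal_iff_ite.mp e.orthonormal
  simp only [emb, inner_add_left, inner_add_right, inner_smul_left, inner_smul_right,
    Complex.conj_ofReal, he]
  norm_num [Fin.ext_iff]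
  push_cast
  ring

lemma emb_tail (e : OrthonormalBasis (Fin n) ℂ H) (h3 : 3 ≤ n) (a b c : ℝ) :
    ∀ k : Fin n, 3 ≤ (k : ℕ) → ⟪emb e h3 a b c, e k⟫_ℂ = 0 := by
  intro k hk
  have he := orthonormal_iff_ite.mp e.orthonormal
  have h0 : ¬((⟨0, by omega⟩ : Fin n) = k) := by simp [Fin.ext_iff]; omega
  have h1 : ¬((⟨1, by omega⟩ : Fin n) = k) := by simp [Fin.ext_iff]; omega
  have h2 : ¬((⟨2, by omega⟩ : Fin n) = k) := by simp [Fin.ext_iff]; omega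
  simp only [emb, inner_add_left, inner_smul_left, Complex.conj_ofReal, he]
  simp [h0, h1, h2]

lemma emb_ne (e : OrthonormalBasis (Fin n) ℂ H) (h3 : 3 ≤ n) (a b c : ℝ)
    (h : a * a + b * b + c * c ≠ 0) : emb e h3 a b c ≠ 0 := by
  intro h0
  have h1 : ((a * a + b * b + c * c : ℝ) : ℂ) = 0 := by
    rw [← emb_inner e h3 a b c a b c, h0, inner_zero_left]
  exact h (by exact_mod_cast h1)

lemma emb_e0 (e : OrthonormalBasis (Fin n) ℂ H) (h3 : 3 ≤ n) :
    emb e h3 1 0 0 = e ⟨0, by omega⟩ := by simp [emb]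


lemma ksCore (p0 p1 p2 p3 p4 p5 p6 p7 p8 p9 p10 p11 p12 p13 p14 p15 p16 p17 p18 p19 p20 p21 p22 p23 p24 p25 p26 p27 p28 p29 p30 p31 p32 p33 p34 p35 p36 : Prop)
    (hpin : p4)
    (h0 : (p0 ∨ p1 ∨ p4) ∧ ¬(p0 ∧ p1) ∧ ¬(p0 ∧ p4) ∧ ¬(p1 ∧ p4))
    (h1 : (p0 ∨ p9 ∨ p13) ∧ ¬(p0 ∧ p9) ∧ ¬(p0 ∧ p13) ∧ ¬(p9 ∧ p13))
    (h2 : (p1 ∨ p6 ∨ p12) ∧ ¬(p1 ∧ p6) ∧ ¬(p1 ∧ p12) ∧ ¬(p6 ∧ p12))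
    (h3 : (p2 ∨ p3 ∨ p4) ∧ ¬(p2 ∧ p3) ∧ ¬(p2 ∧ p4) ∧ ¬(p3 ∧ p4))
    (h4 : (p2 ∨ p8 ∨ p18) ∧ ¬(p2 ∧ p8) ∧ ¬(p2 ∧ p18) ∧ ¬(p8 ∧ p18))
    (h5 : (p2 ∨ p10 ∨ p19) ∧ ¬(p2 ∧ p10) ∧ ¬(p2 ∧ p19) ∧ ¬(p10 ∧ p19))
    (h6 : (p2 ∨ p15 ∨ p16) ∧ ¬(p2 ∧ p15) ∧ ¬(p2 ∧ p16) ∧ ¬(p15 ∧ p16))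
    (h7 : (p3 ∨ p11 ∨ p20) ∧ ¬(p3 ∧ p11) ∧ ¬(p3 ∧ p20) ∧ ¬(p11 ∧ p20))
    (h8 : (p3 ∨ p14 ∨ p17) ∧ ¬(p3 ∧ p14) ∧ ¬(p3 ∧ p17) ∧ ¬(p14 ∧ p17))
    (h9 : (p5 ∨ p15 ∨ p21) ∧ ¬(p5 ∧ p15) ∧ ¬(p5 ∧ p21) ∧ ¬(p15 ∧ p21))
    (h10 : (p5 ∨ p17 ∨ p22) ∧ ¬(p5 ∧ p17) ∧ ¬(p5 ∧ p22) ∧ ¬(p17 ∧ p22))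
    (h11 : (p6 ∨ p14 ∨ p23) ∧ ¬(p6 ∧ p14) ∧ ¬(p6 ∧ p23) ∧ ¬(p14 ∧ p23))
    (h12 : (p6 ∨ p16 ∨ p24) ∧ ¬(p6 ∧ p16) ∧ ¬(p6 ∧ p24) ∧ ¬(p16 ∧ p24))
    (h13 : (p7 ∨ p16 ∨ p25) ∧ ¬(p7 ∧ p16) ∧ ¬(p7 ∧ p25) ∧ ¬(p16 ∧ p25))
    (h14 : (p7 ∨ p17 ∨ p26) ∧ ¬(p7 ∧ p17) ∧ ¬(p7 ∧ p26) ∧ ¬(p17 ∧ p26))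
    (h15 : (p8 ∨ p12 ∨ p27) ∧ ¬(p8 ∧ p12) ∧ ¬(p8 ∧ p27) ∧ ¬(p12 ∧ p27))
    (h16 : (p9 ∨ p14 ∨ p28) ∧ ¬(p9 ∧ p14) ∧ ¬(p9 ∧ p28) ∧ ¬(p14 ∧ p28))
    (h17 : (p9 ∨ p15 ∨ p29) ∧ ¬(p9 ∧ p15) ∧ ¬(p9 ∧ p29) ∧ ¬(p15 ∧ p29))
    (h18 : (p10 ∨ p13 ∨ p30) ∧ ¬(p10 ∧ p13) ∧ ¬(p10 ∧ p30) ∧ ¬(p13 ∧ p30))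
    (h19 : (p11 ∨ p12 ∨ p31) ∧ ¬(p11 ∧ p12) ∧ ¬(p11 ∧ p31) ∧ ¬(p12 ∧ p31))
    (h20 : (p11 ∨ p13 ∨ p32) ∧ ¬(p11 ∧ p13) ∧ ¬(p11 ∧ p32) ∧ ¬(p13 ∧ p32))
    (h21 : (p18 ∨ p22 ∨ p33) ∧ ¬(p18 ∧ p22) ∧ ¬(p18 ∧ p33) ∧ ¬(p22 ∧ p33))
    (h22 : (p19 ∨ p26 ∨ p34) ∧ ¬(p19 ∧ p26) ∧ ¬(p19 ∧ p34) ∧ ¬(p26 ∧ p34))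
    (h23 : (p20 ∨ p21 ∨ p35) ∧ ¬(p20 ∧ p21) ∧ ¬(p20 ∧ p35) ∧ ¬(p21 ∧ p35))
    (h24 : (p20 ∨ p25 ∨ p36) ∧ ¬(p20 ∧ p25) ∧ ¬(p20 ∧ p36) ∧ ¬(p25 ∧ p36)) : False := by
  by_cases hc5x1 : p5
  · simp_all
  · by_cases hc6x2 : p6
    · simp_all
    · simp_all


end KSProof


open KSProof in
set_option maxHeartbeats 2000000 in
/-- **Kochen–Specker theorem, projection formulation.**  Let `H` be a finite-dimensional
complex Hilbert space with `dim H > 2`.  Then there is no function `w` assigning to every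
orthogonal projection `P` on `H` (i.e. every bounded operator with `P = P* = P²`) a value
`w P ∈ {0, 1}` such that for every finite family of mutually orthogonal projections
`P₁, …, Pₙ` summing to the identity, exactly one of the values `w P₁, …, w Pₙ` equals `1`. -/
theorem kochen_specker_projections
    {H : Type*} [NormedAddCommGroup H] [InnerProductSpace ℂ H]
    [FiniteDimensional ℂ H] (hdim : 2 < Module.finrank ℂ H) :
    ¬ ∃ w : (H →L[ℂ] H) → ℝ,
        (∀ P : H →L[ℂ] H, IsSelfAdjoint P → P * P = P → w P = 0 ∨ w P = 1) ∧
        (∀ (n : ℕ) (P : Fin n → (H →L[ℂ] H)),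
          (∀ i, IsSelfAdjoint (P i)) →
          (∀ i, P i * P i = P i) →
          (∀ i j, i ≠ j → P i * P j = 0) →
          (∑ i, P i = 1) →
          ∃! i, w (P i) = 1) := by
  rintro ⟨w, -, hres⟩
  classical
  have h3 : 3 ≤ Module.finrank ℂ H := hdim
  have h2 : Real.sqrt 2 * Real.sqrt 2 = 2 := Real.mul_self_sqrt (by norm_num)
  have hl : (1.4 : ℝ) < Real.sqrt 2 := by nlinarith [Real.sqrt_nonneg 2, h2]
  have hh : Real.sqrt 2 < (1.5 : ℝ) := by nlinarith [Real.sqrt_nonneg 2, h2]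
  set b0 : OrthonormalBasis (Fin (Module.finrank ℂ H)) ℂ H := stdOrthonormalBasis ℂ H with hb0
  obtain ⟨i0, hi0, hi0un⟩ := hres (Module.finrank ℂ H) (fun i => pr (b0 i))
    (fun i => pr_sa _) (fun i => pr_idem _ (b0.orthonormal.1 i))
    (fun i j hij => pr_orth (b0.orthonormal.2 hij)) (pr_sum (by omega) _ b0.orthonormal rfl)
  set z0 : Fin (Module.finrank ℂ H) := ⟨0, by omega⟩ with hz0
  set e : OrthonormalBasis (Fin (Module.finrank ℂ H)) ℂ H := b0.reindex (Equiv.swap i0 z0) with hedef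
  have he0 : w (pr (e z0)) = 1 := by
    rw [hedef, OrthonormalBasis.reindex_apply, Equiv.symm_swap, Equiv.swap_apply_right]
    exact hi0
  have htail : ∀ k : Fin (Module.finrank ℂ H), 3 ≤ (k : ℕ) → w (pr (e k)) ≠ 1 := by
    intro k hk hw1
    rw [hedef, OrthonormalBasis.reindex_apply, Equiv.symm_swap] at hw1
    have h1 := hi0un _ hw1
    have h2' : k = z0 := (Equiv.swap i0 z0).injective (h1.trans (Equiv.swap_apply_right i0 z0).symm)
    rw [h2'] at hk
    norm_num [hz0] at hk
  have hpin : w (pr (nv (emb e h3 (1 : ℝ) (0 : ℝ) (0 : ℝ)))) = 1 := by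
    have hemb : (emb e h3 (1 : ℝ) (0 : ℝ) (0 : ℝ)) = e ⟨0, by omega⟩ := by
      simpa using emb_e0 e h3
    rw [hemb, nv_one _ (e.orthonormal.1 _)]
    exact he0
  have hne0 : emb e h3 (0 : ℝ) (0 : ℝ) (1 : ℝ) ≠ 0 := emb_ne e h3 _ _ _ (by
    intro hz0
    have hm : (0 : ℝ) * (0 : ℝ) + (0 : ℝ) * (0 : ℝ) + (1 : ℝ) * (1 : ℝ) = (1 : ℝ) + (0 : ℝ) * Real.sqrt 2 := by linear_combination (0 : ℝ) * h2
    rw [hm] at hz0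
    linarith [hl, hh])
  have hne1 : emb e h3 (0 : ℝ) (1 : ℝ) (0 : ℝ) ≠ 0 := emb_ne e h3 _ _ _ (by
    intro hz0
    have hm : (0 : ℝ) * (0 : ℝ) + (1 : ℝ) * (1 : ℝ) + (0 : ℝ) * (0 : ℝ) = (1 : ℝ) + (0 : ℝ) * Real.sqrt 2 := by linear_combination (0 : ℝ) * h2
    rw [hm] at hz0
    linarith [hl, hh])
  have hne2 : emb e h3 (0 : ℝ) (1 : ℝ) (1 : ℝ) ≠ 0 := emb_ne e h3 _ _ _ (by
    intro hz0
    have hm : (0 : ℝ) * (0 : ℝ) + (1 : ℝ) * (1 : ℝ) + (1 : ℝ) * (1 : ℝ) = (2 : ℝ) + (0 : ℝ) * Real.sqrt 2 := by linear_combination (0 : ℝ) * h2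
    rw [hm] at hz0
    linarith [hl, hh])
  have hne3 : emb e h3 (0 : ℝ) (1 : ℝ) (-1 : ℝ) ≠ 0 := emb_ne e h3 _ _ _ (by
    intro hz0
    have hm : (0 : ℝ) * (0 : ℝ) + (1 : ℝ) * (1 : ℝ) + (-1 : ℝ) * (-1 : ℝ) = (2 : ℝ) + (0 : ℝ) * Real.sqrt 2 := by linear_combination (0 : ℝ) * h2
    rw [hm] at hz0
    linarith [hl, hh])
  have hne4 : emb e h3 (1 : ℝ) (0 : ℝ) (0 : ℝ) ≠ 0 := emb_ne e h3 _ _ _ (by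
    intro hz0
    have hm : (1 : ℝ) * (1 : ℝ) + (0 : ℝ) * (0 : ℝ) + (0 : ℝ) * (0 : ℝ) = (1 : ℝ) + (0 : ℝ) * Real.sqrt 2 := by linear_combination (0 : ℝ) * h2
    rw [hm] at hz0
    linarith [hl, hh])
  have hne5 : emb e h3 (1 : ℝ) (0 : ℝ) ((1 : ℝ) * Real.sqrt 2) ≠ 0 := emb_ne e h3 _ _ _ (by
    intro hz0
    have hm : (1 : ℝ) * (1 : ℝ) + (0 : ℝ) * (0 : ℝ) + ((1 : ℝ) * Real.sqrt 2) * ((1 : ℝ) * Real.sqrt 2) = (3 : ℝ) + (0 : ℝ) * Real.sqrt 2 := by linear_combination (1 : ℝ) * h2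
    rw [hm] at hz0
    linarith [hl, hh])
  have hne6 : emb e h3 (1 : ℝ) (0 : ℝ) ((-1 : ℝ) * Real.sqrt 2) ≠ 0 := emb_ne e h3 _ _ _ (by
    intro hz0
    have hm : (1 : ℝ) * (1 : ℝ) + (0 : ℝ) * (0 : ℝ) + ((-1 : ℝ) * Real.sqrt 2) * ((-1 : ℝ) * Real.sqrt 2) = (3 : ℝ) + (0 : ℝ) * Real.sqrt 2 := by linear_combination (1 : ℝ) * h2
    rw [hm] at hz0
    linarith [hl, hh])
  have hne7 : emb e h3 (1 : ℝ) ((1 : ℝ) * Real.sqrt 2) (0 : ℝ) ≠ 0 := emb_ne e h3 _ _ _ (by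
    intro hz0
    have hm : (1 : ℝ) * (1 : ℝ) + ((1 : ℝ) * Real.sqrt 2) * ((1 : ℝ) * Real.sqrt 2) + (0 : ℝ) * (0 : ℝ) = (3 : ℝ) + (0 : ℝ) * Real.sqrt 2 := by linear_combination (1 : ℝ) * h2
    rw [hm] at hz0
    linarith [hl, hh])
  have hne8 : emb e h3 (1 : ℝ) ((1 : ℝ) * Real.sqrt 2) ((-1 : ℝ) * Real.sqrt 2) ≠ 0 := emb_ne e h3 _ _ _ (by
    intro hz0
    have hm : (1 : ℝ) * (1 : ℝ) + ((1 : ℝ) * Real.sqrt 2) * ((1 : ℝ) * Real.sqrt 2) + ((-1 : ℝ) * Real.sqrt 2) * ((-1 : ℝ) * Real.sqrt 2) = (5 : ℝ) + (0 : ℝ) * Real.sqrt 2 := by linear_combination (2 : ℝ) * h2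
    rw [hm] at hz0
    linarith [hl, hh])
  have hne9 : emb e h3 (1 : ℝ) ((-1 : ℝ) * Real.sqrt 2) (0 : ℝ) ≠ 0 := emb_ne e h3 _ _ _ (by
    intro hz0
    have hm : (1 : ℝ) * (1 : ℝ) + ((-1 : ℝ) * Real.sqrt 2) * ((-1 : ℝ) * Real.sqrt 2) + (0 : ℝ) * (0 : ℝ) = (3 : ℝ) + (0 : ℝ) * Real.sqrt 2 := by linear_combination (1 : ℝ) * h2
    rw [hm] at hz0
    linarith [hl, hh])
  have hne10 : emb e h3 (1 : ℝ) ((-1 : ℝ) * Real.sqrt 2) ((1 : ℝ) * Real.sqrt 2) ≠ 0 := emb_ne e h3 _ _ _ (by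
    intro hz0
    have hm : (1 : ℝ) * (1 : ℝ) + ((-1 : ℝ) * Real.sqrt 2) * ((-1 : ℝ) * Real.sqrt 2) + ((1 : ℝ) * Real.sqrt 2) * ((1 : ℝ) * Real.sqrt 2) = (5 : ℝ) + (0 : ℝ) * Real.sqrt 2 := by linear_combination (2 : ℝ) * h2
    rw [hm] at hz0
    linarith [hl, hh])
  have hne11 : emb e h3 (1 : ℝ) ((-1 : ℝ) * Real.sqrt 2) ((-1 : ℝ) * Real.sqrt 2) ≠ 0 := emb_ne e h3 _ _ _ (by
    intro hz0
    have hm : (1 : ℝ) * (1 : ℝ) + ((-1 : ℝ) * Real.sqrt 2) * ((-1 : ℝ) * Real.sqrt 2) + ((-1 : ℝ) * Real.sqrt 2) * ((-1 : ℝ) * Real.sqrt 2) = (5 : ℝ) + (0 : ℝ) * Real.sqrt 2 := by linear_combination (2 : ℝ) * h2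
    rw [hm] at hz0
    linarith [hl, hh])
  have hne12 : emb e h3 ((1 : ℝ) * Real.sqrt 2) (0 : ℝ) (1 : ℝ) ≠ 0 := emb_ne e h3 _ _ _ (by
    intro hz0
    have hm : ((1 : ℝ) * Real.sqrt 2) * ((1 : ℝ) * Real.sqrt 2) + (0 : ℝ) * (0 : ℝ) + (1 : ℝ) * (1 : ℝ) = (3 : ℝ) + (0 : ℝ) * Real.sqrt 2 := by linear_combination (1 : ℝ) * h2
    rw [hm] at hz0
    linarith [hl, hh])
  have hne13 : emb e h3 ((1 : ℝ) * Real.sqrt 2) (1 : ℝ) (0 : ℝ) ≠ 0 := emb_ne e h3 _ _ _ (by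
    intro hz0
    have hm : ((1 : ℝ) * Real.sqrt 2) * ((1 : ℝ) * Real.sqrt 2) + (1 : ℝ) * (1 : ℝ) + (0 : ℝ) * (0 : ℝ) = (3 : ℝ) + (0 : ℝ) * Real.sqrt 2 := by linear_combination (1 : ℝ) * h2
    rw [hm] at hz0
    linarith [hl, hh])
  have hne14 : emb e h3 ((1 : ℝ) * Real.sqrt 2) (1 : ℝ) (1 : ℝ) ≠ 0 := emb_ne e h3 _ _ _ (by
    intro hz0
    have hm : ((1 : ℝ) * Real.sqrt 2) * ((1 : ℝ) * Real.sqrt 2) + (1 : ℝ) * (1 : ℝ) + (1 : ℝ) * (1 : ℝ) = (4 : ℝ) + (0 : ℝ) * Real.sqrt 2 := by linear_combination (1 : ℝ) * h2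
    rw [hm] at hz0
    linarith [hl, hh])
  have hne15 : emb e h3 ((1 : ℝ) * Real.sqrt 2) (1 : ℝ) (-1 : ℝ) ≠ 0 := emb_ne e h3 _ _ _ (by
    intro hz0
    have hm : ((1 : ℝ) * Real.sqrt 2) * ((1 : ℝ) * Real.sqrt 2) + (1 : ℝ) * (1 : ℝ) + (-1 : ℝ) * (-1 : ℝ) = (4 : ℝ) + (0 : ℝ) * Real.sqrt 2 := by linear_combination (1 : ℝ) * h2
    rw [hm] at hz0
    linarith [hl, hh])
  have hne16 : emb e h3 ((1 : ℝ) * Real.sqrt 2) (-1 : ℝ) (1 : ℝ) ≠ 0 := emb_ne e h3 _ _ _ (by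
    intro hz0
    have hm : ((1 : ℝ) * Real.sqrt 2) * ((1 : ℝ) * Real.sqrt 2) + (-1 : ℝ) * (-1 : ℝ) + (1 : ℝ) * (1 : ℝ) = (4 : ℝ) + (0 : ℝ) * Real.sqrt 2 := by linear_combination (1 : ℝ) * h2
    rw [hm] at hz0
    linarith [hl, hh])
  have hne17 : emb e h3 ((1 : ℝ) * Real.sqrt 2) (-1 : ℝ) (-1 : ℝ) ≠ 0 := emb_ne e h3 _ _ _ (by
    intro hz0
    have hm : ((1 : ℝ) * Real.sqrt 2) * ((1 : ℝ) * Real.sqrt 2) + (-1 : ℝ) * (-1 : ℝ) + (-1 : ℝ) * (-1 : ℝ) = (4 : ℝ) + (0 : ℝ) * Real.sqrt 2 := by linear_combination (1 : ℝ) * h2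
    rw [hm] at hz0
    linarith [hl, hh])
  have hne18 : emb e h3 ((-2 : ℝ) * Real.sqrt 2) (1 : ℝ) (-1 : ℝ) ≠ 0 := emb_ne e h3 _ _ _ (by
    intro hz0
    have hm : ((-2 : ℝ) * Real.sqrt 2) * ((-2 : ℝ) * Real.sqrt 2) + (1 : ℝ) * (1 : ℝ) + (-1 : ℝ) * (-1 : ℝ) = (10 : ℝ) + (0 : ℝ) * Real.sqrt 2 := by linear_combination (4 : ℝ) * h2
    rw [hm] at hz0
    linarith [hl, hh])
  have hne19 : emb e h3 ((2 : ℝ) * Real.sqrt 2) (1 : ℝ) (-1 : ℝ) ≠ 0 := emb_ne e h3 _ _ _ (by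
    intro hz0
    have hm : ((2 : ℝ) * Real.sqrt 2) * ((2 : ℝ) * Real.sqrt 2) + (1 : ℝ) * (1 : ℝ) + (-1 : ℝ) * (-1 : ℝ) = (10 : ℝ) + (0 : ℝ) * Real.sqrt 2 := by linear_combination (4 : ℝ) * h2
    rw [hm] at hz0
    linarith [hl, hh])
  have hne20 : emb e h3 ((-2 : ℝ) * Real.sqrt 2) (-1 : ℝ) (-1 : ℝ) ≠ 0 := emb_ne e h3 _ _ _ (by
    intro hz0
    have hm : ((-2 : ℝ) * Real.sqrt 2) * ((-2 : ℝ) * Real.sqrt 2) + (-1 : ℝ) * (-1 : ℝ) + (-1 : ℝ) * (-1 : ℝ) = (10 : ℝ) + (0 : ℝ) * Real.sqrt 2 := by linear_combination (4 : ℝ) * h2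
    rw [hm] at hz0
    linarith [hl, hh])
  have hne21 : emb e h3 ((-1 : ℝ) * Real.sqrt 2) (3 : ℝ) (1 : ℝ) ≠ 0 := emb_ne e h3 _ _ _ (by
    intro hz0
    have hm : ((-1 : ℝ) * Real.sqrt 2) * ((-1 : ℝ) * Real.sqrt 2) + (3 : ℝ) * (3 : ℝ) + (1 : ℝ) * (1 : ℝ) = (12 : ℝ) + (0 : ℝ) * Real.sqrt 2 := by linear_combination (1 : ℝ) * h2
    rw [hm] at hz0
    linarith [hl, hh])
  have hne22 : emb e h3 ((1 : ℝ) * Real.sqrt 2) (3 : ℝ) (-1 : ℝ) ≠ 0 := emb_ne e h3 _ _ _ (by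
    intro hz0
    have hm : ((1 : ℝ) * Real.sqrt 2) * ((1 : ℝ) * Real.sqrt 2) + (3 : ℝ) * (3 : ℝ) + (-1 : ℝ) * (-1 : ℝ) = (12 : ℝ) + (0 : ℝ) * Real.sqrt 2 := by linear_combination (1 : ℝ) * h2
    rw [hm] at hz0
    linarith [hl, hh])
  have hne23 : emb e h3 ((1 : ℝ) * Real.sqrt 2) (-3 : ℝ) (1 : ℝ) ≠ 0 := emb_ne e h3 _ _ _ (by
    intro hz0
    have hm : ((1 : ℝ) * Real.sqrt 2) * ((1 : ℝ) * Real.sqrt 2) + (-3 : ℝ) * (-3 : ℝ) + (1 : ℝ) * (1 : ℝ) = (12 : ℝ) + (0 : ℝ) * Real.sqrt 2 := by linear_combination (1 : ℝ) * h2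
    rw [hm] at hz0
    linarith [hl, hh])
  have hne24 : emb e h3 ((-1 : ℝ) * Real.sqrt 2) (-3 : ℝ) (-1 : ℝ) ≠ 0 := emb_ne e h3 _ _ _ (by
    intro hz0
    have hm : ((-1 : ℝ) * Real.sqrt 2) * ((-1 : ℝ) * Real.sqrt 2) + (-3 : ℝ) * (-3 : ℝ) + (-1 : ℝ) * (-1 : ℝ) = (12 : ℝ) + (0 : ℝ) * Real.sqrt 2 := by linear_combination (1 : ℝ) * h2
    rw [hm] at hz0
    linarith [hl, hh])
  have hne25 : emb e h3 ((1 : ℝ) * Real.sqrt 2) (-1 : ℝ) (-3 : ℝ) ≠ 0 := emb_ne e h3 _ _ _ (by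
    intro hz0
    have hm : ((1 : ℝ) * Real.sqrt 2) * ((1 : ℝ) * Real.sqrt 2) + (-1 : ℝ) * (-1 : ℝ) + (-3 : ℝ) * (-3 : ℝ) = (12 : ℝ) + (0 : ℝ) * Real.sqrt 2 := by linear_combination (1 : ℝ) * h2
    rw [hm] at hz0
    linarith [hl, hh])
  have hne26 : emb e h3 ((-1 : ℝ) * Real.sqrt 2) (1 : ℝ) (-3 : ℝ) ≠ 0 := emb_ne e h3 _ _ _ (by
    intro hz0
    have hm : ((-1 : ℝ) * Real.sqrt 2) * ((-1 : ℝ) * Real.sqrt 2) + (1 : ℝ) * (1 : ℝ) + (-3 : ℝ) * (-3 : ℝ) = (12 : ℝ) + (0 : ℝ) * Real.sqrt 2 := by linear_combination (1 : ℝ) * h2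
    rw [hm] at hz0
    linarith [hl, hh])
  have hne27 : emb e h3 ((1 : ℝ) * Real.sqrt 2) (-3 : ℝ) (-2 : ℝ) ≠ 0 := emb_ne e h3 _ _ _ (by
    intro hz0
    have hm : ((1 : ℝ) * Real.sqrt 2) * ((1 : ℝ) * Real.sqrt 2) + (-3 : ℝ) * (-3 : ℝ) + (-2 : ℝ) * (-2 : ℝ) = (15 : ℝ) + (0 : ℝ) * Real.sqrt 2 := by linear_combination (1 : ℝ) * h2
    rw [hm] at hz0
    linarith [hl, hh])
  have hne28 : emb e h3 ((-1 : ℝ) * Real.sqrt 2) (-1 : ℝ) (3 : ℝ) ≠ 0 := emb_ne e h3 _ _ _ (by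
    intro hz0
    have hm : ((-1 : ℝ) * Real.sqrt 2) * ((-1 : ℝ) * Real.sqrt 2) + (-1 : ℝ) * (-1 : ℝ) + (3 : ℝ) * (3 : ℝ) = (12 : ℝ) + (0 : ℝ) * Real.sqrt 2 := by linear_combination (1 : ℝ) * h2
    rw [hm] at hz0
    linarith [hl, hh])
  have hne29 : emb e h3 ((1 : ℝ) * Real.sqrt 2) (1 : ℝ) (3 : ℝ) ≠ 0 := emb_ne e h3 _ _ _ (by
    intro hz0
    have hm : ((1 : ℝ) * Real.sqrt 2) * ((1 : ℝ) * Real.sqrt 2) + (1 : ℝ) * (1 : ℝ) + (3 : ℝ) * (3 : ℝ) = (12 : ℝ) + (0 : ℝ) * Real.sqrt 2 := by linear_combination (1 : ℝ) * h2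
    rw [hm] at hz0
    linarith [hl, hh])
  have hne30 : emb e h3 ((-1 : ℝ) * Real.sqrt 2) (2 : ℝ) (3 : ℝ) ≠ 0 := emb_ne e h3 _ _ _ (by
    intro hz0
    have hm : ((-1 : ℝ) * Real.sqrt 2) * ((-1 : ℝ) * Real.sqrt 2) + (2 : ℝ) * (2 : ℝ) + (3 : ℝ) * (3 : ℝ) = (15 : ℝ) + (0 : ℝ) * Real.sqrt 2 := by linear_combination (1 : ℝ) * h2
    rw [hm] at hz0
    linarith [hl, hh])
  have hne31 : emb e h3 ((-1 : ℝ) * Real.sqrt 2) (-3 : ℝ) (2 : ℝ) ≠ 0 := emb_ne e h3 _ _ _ (by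
    intro hz0
    have hm : ((-1 : ℝ) * Real.sqrt 2) * ((-1 : ℝ) * Real.sqrt 2) + (-3 : ℝ) * (-3 : ℝ) + (2 : ℝ) * (2 : ℝ) = (15 : ℝ) + (0 : ℝ) * Real.sqrt 2 := by linear_combination (1 : ℝ) * h2
    rw [hm] at hz0
    linarith [hl, hh])
  have hne32 : emb e h3 ((1 : ℝ) * Real.sqrt 2) (-2 : ℝ) (3 : ℝ) ≠ 0 := emb_ne e h3 _ _ _ (by
    intro hz0
    have hm : ((1 : ℝ) * Real.sqrt 2) * ((1 : ℝ) * Real.sqrt 2) + (-2 : ℝ) * (-2 : ℝ) + (3 : ℝ) * (3 : ℝ) = (15 : ℝ) + (0 : ℝ) * Real.sqrt 2 := by linear_combination (1 : ℝ) * h2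
    rw [hm] at hz0
    linarith [hl, hh])
  have hne33 : emb e h3 (2 : ℝ) ((-3 : ℝ) * Real.sqrt 2) ((-7 : ℝ) * Real.sqrt 2) ≠ 0 := emb_ne e h3 _ _ _ (by
    intro hz0
    have hm : (2 : ℝ) * (2 : ℝ) + ((-3 : ℝ) * Real.sqrt 2) * ((-3 : ℝ) * Real.sqrt 2) + ((-7 : ℝ) * Real.sqrt 2) * ((-7 : ℝ) * Real.sqrt 2) = (120 : ℝ) + (0 : ℝ) * Real.sqrt 2 := by linear_combination (58 : ℝ) * h2
    rw [hm] at hz0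
    linarith [hl, hh])
  have hne34 : emb e h3 (-2 : ℝ) ((7 : ℝ) * Real.sqrt 2) ((3 : ℝ) * Real.sqrt 2) ≠ 0 := emb_ne e h3 _ _ _ (by
    intro hz0
    have hm : (-2 : ℝ) * (-2 : ℝ) + ((7 : ℝ) * Real.sqrt 2) * ((7 : ℝ) * Real.sqrt 2) + ((3 : ℝ) * Real.sqrt 2) * ((3 : ℝ) * Real.sqrt 2) = (120 : ℝ) + (0 : ℝ) * Real.sqrt 2 := by linear_combination (58 : ℝ) * h2
    rw [hm] at hz0
    linarith [hl, hh])
  have hne35 : emb e h3 (2 : ℝ) ((3 : ℝ) * Real.sqrt 2) ((-7 : ℝ) * Real.sqrt 2) ≠ 0 := emb_ne e h3 _ _ _ (by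
    intro hz0
    have hm : (2 : ℝ) * (2 : ℝ) + ((3 : ℝ) * Real.sqrt 2) * ((3 : ℝ) * Real.sqrt 2) + ((-7 : ℝ) * Real.sqrt 2) * ((-7 : ℝ) * Real.sqrt 2) = (120 : ℝ) + (0 : ℝ) * Real.sqrt 2 := by linear_combination (58 : ℝ) * h2
    rw [hm] at hz0
    linarith [hl, hh])
  have hne36 : emb e h3 (2 : ℝ) ((-7 : ℝ) * Real.sqrt 2) ((3 : ℝ) * Real.sqrt 2) ≠ 0 := emb_ne e h3 _ _ _ (by
    intro hz0
    have hm : (2 : ℝ) * (2 : ℝ) + ((-7 : ℝ) * Real.sqrt 2) * ((-7 : ℝ) * Real.sqrt 2) + ((3 : ℝ) * Real.sqrt 2) * ((3 : ℝ) * Real.sqrt 2) = (120 : ℝ) + (0 : ℝ) * Real.sqrt 2 := by linear_combination (58 : ℝ) * h2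
    rw [hm] at hz0
    linarith [hl, hh])
  have ho0x1 : ⟪emb e h3 (0 : ℝ) (0 : ℝ) (1 : ℝ), emb e h3 (0 : ℝ) (1 : ℝ) (0 : ℝ)⟫_ℂ = 0 := by
    rw [emb_inner, Complex.ofReal_eq_zero]
    linear_combination (0 : ℝ) * h2
  have ho0x4 : ⟪emb e h3 (0 : ℝ) (0 : ℝ) (1 : ℝ), emb e h3 (1 : ℝ) (0 : ℝ) (0 : ℝ)⟫_ℂ = 0 := by
    rw [emb_inner, Complex.ofReal_eq_zero]
    linear_combination (0 : ℝ) * h2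
  have ho0x9 : ⟪emb e h3 (0 : ℝ) (0 : ℝ) (1 : ℝ), emb e h3 (1 : ℝ) ((-1 : ℝ) * Real.sqrt 2) (0 : ℝ)⟫_ℂ = 0 := by
    rw [emb_inner, Complex.ofReal_eq_zero]
    linear_combination (0 : ℝ) * h2
  have ho0x13 : ⟪emb e h3 (0 : ℝ) (0 : ℝ) (1 : ℝ), emb e h3 ((1 : ℝ) * Real.sqrt 2) (1 : ℝ) (0 : ℝ)⟫_ℂ = 0 := by
    rw [emb_inner, Complex.ofReal_eq_zero]
    linear_combination (0 : ℝ) * h2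
  have ho1x4 : ⟪emb e h3 (0 : ℝ) (1 : ℝ) (0 : ℝ), emb e h3 (1 : ℝ) (0 : ℝ) (0 : ℝ)⟫_ℂ = 0 := by
    rw [emb_inner, Complex.ofReal_eq_zero]
    linear_combination (0 : ℝ) * h2
  have ho1x6 : ⟪emb e h3 (0 : ℝ) (1 : ℝ) (0 : ℝ), emb e h3 (1 : ℝ) (0 : ℝ) ((-1 : ℝ) * Real.sqrt 2)⟫_ℂ = 0 := by
    rw [emb_inner, Complex.ofReal_eq_zero]
    linear_combination (0 : ℝ) * h2
  have ho1x12 : ⟪emb e h3 (0 : ℝ) (1 : ℝ) (0 : ℝ), emb e h3 ((1 : ℝ) * Real.sqrt 2) (0 : ℝ) (1 : ℝ)⟫_ℂ = 0 := by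
    rw [emb_inner, Complex.ofReal_eq_zero]
    linear_combination (0 : ℝ) * h2
  have ho2x3 : ⟪emb e h3 (0 : ℝ) (1 : ℝ) (1 : ℝ), emb e h3 (0 : ℝ) (1 : ℝ) (-1 : ℝ)⟫_ℂ = 0 := by
    rw [emb_inner, Complex.ofReal_eq_zero]
    linear_combination (0 : ℝ) * h2
  have ho2x4 : ⟪emb e h3 (0 : ℝ) (1 : ℝ) (1 : ℝ), emb e h3 (1 : ℝ) (0 : ℝ) (0 : ℝ)⟫_ℂ = 0 := by
    rw [emb_inner, Complex.ofReal_eq_zero]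
    linear_combination (0 : ℝ) * h2
  have ho2x8 : ⟪emb e h3 (0 : ℝ) (1 : ℝ) (1 : ℝ), emb e h3 (1 : ℝ) ((1 : ℝ) * Real.sqrt 2) ((-1 : ℝ) * Real.sqrt 2)⟫_ℂ = 0 := by
    rw [emb_inner, Complex.ofReal_eq_zero]
    linear_combination (0 : ℝ) * h2
  have ho2x10 : ⟪emb e h3 (0 : ℝ) (1 : ℝ) (1 : ℝ), emb e h3 (1 : ℝ) ((-1 : ℝ) * Real.sqrt 2) ((1 : ℝ) * Real.sqrt 2)⟫_ℂ = 0 := by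
    rw [emb_inner, Complex.ofReal_eq_zero]
    linear_combination (0 : ℝ) * h2
  have ho2x15 : ⟪emb e h3 (0 : ℝ) (1 : ℝ) (1 : ℝ), emb e h3 ((1 : ℝ) * Real.sqrt 2) (1 : ℝ) (-1 : ℝ)⟫_ℂ = 0 := by
    rw [emb_inner, Complex.ofReal_eq_zero]
    linear_combination (0 : ℝ) * h2
  have ho2x16 : ⟪emb e h3 (0 : ℝ) (1 : ℝ) (1 : ℝ), emb e h3 ((1 : ℝ) * Real.sqrt 2) (-1 : ℝ) (1 : ℝ)⟫_ℂ = 0 := by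
    rw [emb_inner, Complex.ofReal_eq_zero]
    linear_combination (0 : ℝ) * h2
  have ho2x18 : ⟪emb e h3 (0 : ℝ) (1 : ℝ) (1 : ℝ), emb e h3 ((-2 : ℝ) * Real.sqrt 2) (1 : ℝ) (-1 : ℝ)⟫_ℂ = 0 := by
    rw [emb_inner, Complex.ofReal_eq_zero]
    linear_combination (0 : ℝ) * h2
  have ho2x19 : ⟪emb e h3 (0 : ℝ) (1 : ℝ) (1 : ℝ), emb e h3 ((2 : ℝ) * Real.sqrt 2) (1 : ℝ) (-1 : ℝ)⟫_ℂ = 0 := by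
    rw [emb_inner, Complex.ofReal_eq_zero]
    linear_combination (0 : ℝ) * h2
  have ho3x4 : ⟪emb e h3 (0 : ℝ) (1 : ℝ) (-1 : ℝ), emb e h3 (1 : ℝ) (0 : ℝ) (0 : ℝ)⟫_ℂ = 0 := by
    rw [emb_inner, Complex.ofReal_eq_zero]
    linear_combination (0 : ℝ) * h2
  have ho3x11 : ⟪emb e h3 (0 : ℝ) (1 : ℝ) (-1 : ℝ), emb e h3 (1 : ℝ) ((-1 : ℝ) * Real.sqrt 2) ((-1 : ℝ) * Real.sqrt 2)⟫_ℂ = 0 := by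
    rw [emb_inner, Complex.ofReal_eq_zero]
    linear_combination (0 : ℝ) * h2
  have ho3x14 : ⟪emb e h3 (0 : ℝ) (1 : ℝ) (-1 : ℝ), emb e h3 ((1 : ℝ) * Real.sqrt 2) (1 : ℝ) (1 : ℝ)⟫_ℂ = 0 := by
    rw [emb_inner, Complex.ofReal_eq_zero]
    linear_combination (0 : ℝ) * h2
  have ho3x17 : ⟪emb e h3 (0 : ℝ) (1 : ℝ) (-1 : ℝ), emb e h3 ((1 : ℝ) * Real.sqrt 2) (-1 : ℝ) (-1 : ℝ)⟫_ℂ = 0 := by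
    rw [emb_inner, Complex.ofReal_eq_zero]
    linear_combination (0 : ℝ) * h2
  have ho3x20 : ⟪emb e h3 (0 : ℝ) (1 : ℝ) (-1 : ℝ), emb e h3 ((-2 : ℝ) * Real.sqrt 2) (-1 : ℝ) (-1 : ℝ)⟫_ℂ = 0 := by
    rw [emb_inner, Complex.ofReal_eq_zero]
    linear_combination (0 : ℝ) * h2
  have ho5x15 : ⟪emb e h3 (1 : ℝ) (0 : ℝ) ((1 : ℝ) * Real.sqrt 2), emb e h3 ((1 : ℝ) * Real.sqrt 2) (1 : ℝ) (-1 : ℝ)⟫_ℂ = 0 := by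
    rw [emb_inner, Complex.ofReal_eq_zero]
    linear_combination (0 : ℝ) * h2
  have ho5x17 : ⟪emb e h3 (1 : ℝ) (0 : ℝ) ((1 : ℝ) * Real.sqrt 2), emb e h3 ((1 : ℝ) * Real.sqrt 2) (-1 : ℝ) (-1 : ℝ)⟫_ℂ = 0 := by
    rw [emb_inner, Complex.ofReal_eq_zero]
    linear_combination (0 : ℝ) * h2
  have ho5x21 : ⟪emb e h3 (1 : ℝ) (0 : ℝ) ((1 : ℝ) * Real.sqrt 2), emb e h3 ((-1 : ℝ) * Real.sqrt 2) (3 : ℝ) (1 : ℝ)⟫_ℂ = 0 := by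
    rw [emb_inner, Complex.ofReal_eq_zero]
    linear_combination (0 : ℝ) * h2
  have ho5x22 : ⟪emb e h3 (1 : ℝ) (0 : ℝ) ((1 : ℝ) * Real.sqrt 2), emb e h3 ((1 : ℝ) * Real.sqrt 2) (3 : ℝ) (-1 : ℝ)⟫_ℂ = 0 := by
    rw [emb_inner, Complex.ofReal_eq_zero]
    linear_combination (0 : ℝ) * h2
  have ho6x12 : ⟪emb e h3 (1 : ℝ) (0 : ℝ) ((-1 : ℝ) * Real.sqrt 2), emb e h3 ((1 : ℝ) * Real.sqrt 2) (0 : ℝ) (1 : ℝ)⟫_ℂ = 0 := by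
    rw [emb_inner, Complex.ofReal_eq_zero]
    linear_combination (0 : ℝ) * h2
  have ho6x14 : ⟪emb e h3 (1 : ℝ) (0 : ℝ) ((-1 : ℝ) * Real.sqrt 2), emb e h3 ((1 : ℝ) * Real.sqrt 2) (1 : ℝ) (1 : ℝ)⟫_ℂ = 0 := by
    rw [emb_inner, Complex.ofReal_eq_zero]
    linear_combination (0 : ℝ) * h2
  have ho6x16 : ⟪emb e h3 (1 : ℝ) (0 : ℝ) ((-1 : ℝ) * Real.sqrt 2), emb e h3 ((1 : ℝ) * Real.sqrt 2) (-1 : ℝ) (1 : ℝ)⟫_ℂ = 0 := by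
    rw [emb_inner, Complex.ofReal_eq_zero]
    linear_combination (0 : ℝ) * h2
  have ho6x23 : ⟪emb e h3 (1 : ℝ) (0 : ℝ) ((-1 : ℝ) * Real.sqrt 2), emb e h3 ((1 : ℝ) * Real.sqrt 2) (-3 : ℝ) (1 : ℝ)⟫_ℂ = 0 := by
    rw [emb_inner, Complex.ofReal_eq_zero]
    linear_combination (0 : ℝ) * h2
  have ho6x24 : ⟪emb e h3 (1 : ℝ) (0 : ℝ) ((-1 : ℝ) * Real.sqrt 2), emb e h3 ((-1 : ℝ) * Real.sqrt 2) (-3 : ℝ) (-1 : ℝ)⟫_ℂ = 0 := by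
    rw [emb_inner, Complex.ofReal_eq_zero]
    linear_combination (0 : ℝ) * h2
  have ho7x16 : ⟪emb e h3 (1 : ℝ) ((1 : ℝ) * Real.sqrt 2) (0 : ℝ), emb e h3 ((1 : ℝ) * Real.sqrt 2) (-1 : ℝ) (1 : ℝ)⟫_ℂ = 0 := by
    rw [emb_inner, Complex.ofReal_eq_zero]
    linear_combination (0 : ℝ) * h2
  have ho7x17 : ⟪emb e h3 (1 : ℝ) ((1 : ℝ) * Real.sqrt 2) (0 : ℝ), emb e h3 ((1 : ℝ) * Real.sqrt 2) (-1 : ℝ) (-1 : ℝ)⟫_ℂ = 0 := by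
    rw [emb_inner, Complex.ofReal_eq_zero]
    linear_combination (0 : ℝ) * h2
  have ho7x25 : ⟪emb e h3 (1 : ℝ) ((1 : ℝ) * Real.sqrt 2) (0 : ℝ), emb e h3 ((1 : ℝ) * Real.sqrt 2) (-1 : ℝ) (-3 : ℝ)⟫_ℂ = 0 := by
    rw [emb_inner, Complex.ofReal_eq_zero]
    linear_combination (0 : ℝ) * h2
  have ho7x26 : ⟪emb e h3 (1 : ℝ) ((1 : ℝ) * Real.sqrt 2) (0 : ℝ), emb e h3 ((-1 : ℝ) * Real.sqrt 2) (1 : ℝ) (-3 : ℝ)⟫_ℂ = 0 := by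
    rw [emb_inner, Complex.ofReal_eq_zero]
    linear_combination (0 : ℝ) * h2
  have ho8x12 : ⟪emb e h3 (1 : ℝ) ((1 : ℝ) * Real.sqrt 2) ((-1 : ℝ) * Real.sqrt 2), emb e h3 ((1 : ℝ) * Real.sqrt 2) (0 : ℝ) (1 : ℝ)⟫_ℂ = 0 := by
    rw [emb_inner, Complex.ofReal_eq_zero]
    linear_combination (0 : ℝ) * h2
  have ho8x18 : ⟪emb e h3 (1 : ℝ) ((1 : ℝ) * Real.sqrt 2) ((-1 : ℝ) * Real.sqrt 2), emb e h3 ((-2 : ℝ) * Real.sqrt 2) (1 : ℝ) (-1 : ℝ)⟫_ℂ = 0 := by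
    rw [emb_inner, Complex.ofReal_eq_zero]
    linear_combination (0 : ℝ) * h2
  have ho8x27 : ⟪emb e h3 (1 : ℝ) ((1 : ℝ) * Real.sqrt 2) ((-1 : ℝ) * Real.sqrt 2), emb e h3 ((1 : ℝ) * Real.sqrt 2) (-3 : ℝ) (-2 : ℝ)⟫_ℂ = 0 := by
    rw [emb_inner, Complex.ofReal_eq_zero]
    linear_combination (0 : ℝ) * h2
  have ho9x13 : ⟪emb e h3 (1 : ℝ) ((-1 : ℝ) * Real.sqrt 2) (0 : ℝ), emb e h3 ((1 : ℝ) * Real.sqrt 2) (1 : ℝ) (0 : ℝ)⟫_ℂ = 0 := by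
    rw [emb_inner, Complex.ofReal_eq_zero]
    linear_combination (0 : ℝ) * h2
  have ho9x14 : ⟪emb e h3 (1 : ℝ) ((-1 : ℝ) * Real.sqrt 2) (0 : ℝ), emb e h3 ((1 : ℝ) * Real.sqrt 2) (1 : ℝ) (1 : ℝ)⟫_ℂ = 0 := by
    rw [emb_inner, Complex.ofReal_eq_zero]
    linear_combination (0 : ℝ) * h2
  have ho9x15 : ⟪emb e h3 (1 : ℝ) ((-1 : ℝ) * Real.sqrt 2) (0 : ℝ), emb e h3 ((1 : ℝ) * Real.sqrt 2) (1 : ℝ) (-1 : ℝ)⟫_ℂ = 0 := by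
    rw [emb_inner, Complex.ofReal_eq_zero]
    linear_combination (0 : ℝ) * h2
  have ho9x28 : ⟪emb e h3 (1 : ℝ) ((-1 : ℝ) * Real.sqrt 2) (0 : ℝ), emb e h3 ((-1 : ℝ) * Real.sqrt 2) (-1 : ℝ) (3 : ℝ)⟫_ℂ = 0 := by
    rw [emb_inner, Complex.ofReal_eq_zero]
    linear_combination (0 : ℝ) * h2
  have ho9x29 : ⟪emb e h3 (1 : ℝ) ((-1 : ℝ) * Real.sqrt 2) (0 : ℝ), emb e h3 ((1 : ℝ) * Real.sqrt 2) (1 : ℝ) (3 : ℝ)⟫_ℂ = 0 := by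
    rw [emb_inner, Complex.ofReal_eq_zero]
    linear_combination (0 : ℝ) * h2
  have ho10x13 : ⟪emb e h3 (1 : ℝ) ((-1 : ℝ) * Real.sqrt 2) ((1 : ℝ) * Real.sqrt 2), emb e h3 ((1 : ℝ) * Real.sqrt 2) (1 : ℝ) (0 : ℝ)⟫_ℂ = 0 := by
    rw [emb_inner, Complex.ofReal_eq_zero]
    linear_combination (0 : ℝ) * h2
  have ho10x19 : ⟪emb e h3 (1 : ℝ) ((-1 : ℝ) * Real.sqrt 2) ((1 : ℝ) * Real.sqrt 2), emb e h3 ((2 : ℝ) * Real.sqrt 2) (1 : ℝ) (-1 : ℝ)⟫_ℂ = 0 := by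
    rw [emb_inner, Complex.ofReal_eq_zero]
    linear_combination (0 : ℝ) * h2
  have ho10x30 : ⟪emb e h3 (1 : ℝ) ((-1 : ℝ) * Real.sqrt 2) ((1 : ℝ) * Real.sqrt 2), emb e h3 ((-1 : ℝ) * Real.sqrt 2) (2 : ℝ) (3 : ℝ)⟫_ℂ = 0 := by
    rw [emb_inner, Complex.ofReal_eq_zero]
    linear_combination (0 : ℝ) * h2
  have ho11x12 : ⟪emb e h3 (1 : ℝ) ((-1 : ℝ) * Real.sqrt 2) ((-1 : ℝ) * Real.sqrt 2), emb e h3 ((1 : ℝ) * Real.sqrt 2) (0 : ℝ) (1 : ℝ)⟫_ℂ = 0 := by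
    rw [emb_inner, Complex.ofReal_eq_zero]
    linear_combination (0 : ℝ) * h2
  have ho11x13 : ⟪emb e h3 (1 : ℝ) ((-1 : ℝ) * Real.sqrt 2) ((-1 : ℝ) * Real.sqrt 2), emb e h3 ((1 : ℝ) * Real.sqrt 2) (1 : ℝ) (0 : ℝ)⟫_ℂ = 0 := by
    rw [emb_inner, Complex.ofReal_eq_zero]
    linear_combination (0 : ℝ) * h2
  have ho11x20 : ⟪emb e h3 (1 : ℝ) ((-1 : ℝ) * Real.sqrt 2) ((-1 : ℝ) * Real.sqrt 2), emb e h3 ((-2 : ℝ) * Real.sqrt 2) (-1 : ℝ) (-1 : ℝ)⟫_ℂ = 0 := by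
    rw [emb_inner, Complex.ofReal_eq_zero]
    linear_combination (0 : ℝ) * h2
  have ho11x31 : ⟪emb e h3 (1 : ℝ) ((-1 : ℝ) * Real.sqrt 2) ((-1 : ℝ) * Real.sqrt 2), emb e h3 ((-1 : ℝ) * Real.sqrt 2) (-3 : ℝ) (2 : ℝ)⟫_ℂ = 0 := by
    rw [emb_inner, Complex.ofReal_eq_zero]
    linear_combination (0 : ℝ) * h2
  have ho11x32 : ⟪emb e h3 (1 : ℝ) ((-1 : ℝ) * Real.sqrt 2) ((-1 : ℝ) * Real.sqrt 2), emb e h3 ((1 : ℝ) * Real.sqrt 2) (-2 : ℝ) (3 : ℝ)⟫_ℂ = 0 := by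
    rw [emb_inner, Complex.ofReal_eq_zero]
    linear_combination (0 : ℝ) * h2
  have ho12x27 : ⟪emb e h3 ((1 : ℝ) * Real.sqrt 2) (0 : ℝ) (1 : ℝ), emb e h3 ((1 : ℝ) * Real.sqrt 2) (-3 : ℝ) (-2 : ℝ)⟫_ℂ = 0 := by
    rw [emb_inner, Complex.ofReal_eq_zero]
    linear_combination (1 : ℝ) * h2
  have ho12x31 : ⟪emb e h3 ((1 : ℝ) * Real.sqrt 2) (0 : ℝ) (1 : ℝ), emb e h3 ((-1 : ℝ) * Real.sqrt 2) (-3 : ℝ) (2 : ℝ)⟫_ℂ = 0 := by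
    rw [emb_inner, Complex.ofReal_eq_zero]
    linear_combination (-1 : ℝ) * h2
  have ho13x30 : ⟪emb e h3 ((1 : ℝ) * Real.sqrt 2) (1 : ℝ) (0 : ℝ), emb e h3 ((-1 : ℝ) * Real.sqrt 2) (2 : ℝ) (3 : ℝ)⟫_ℂ = 0 := by
    rw [emb_inner, Complex.ofReal_eq_zero]
    linear_combination (-1 : ℝ) * h2
  have ho13x32 : ⟪emb e h3 ((1 : ℝ) * Real.sqrt 2) (1 : ℝ) (0 : ℝ), emb e h3 ((1 : ℝ) * Real.sqrt 2) (-2 : ℝ) (3 : ℝ)⟫_ℂ = 0 := by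
    rw [emb_inner, Complex.ofReal_eq_zero]
    linear_combination (1 : ℝ) * h2
  have ho14x17 : ⟪emb e h3 ((1 : ℝ) * Real.sqrt 2) (1 : ℝ) (1 : ℝ), emb e h3 ((1 : ℝ) * Real.sqrt 2) (-1 : ℝ) (-1 : ℝ)⟫_ℂ = 0 := by
    rw [emb_inner, Complex.ofReal_eq_zero]
    linear_combination (1 : ℝ) * h2
  have ho14x23 : ⟪emb e h3 ((1 : ℝ) * Real.sqrt 2) (1 : ℝ) (1 : ℝ), emb e h3 ((1 : ℝ) * Real.sqrt 2) (-3 : ℝ) (1 : ℝ)⟫_ℂ = 0 := by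
    rw [emb_inner, Complex.ofReal_eq_zero]
    linear_combination (1 : ℝ) * h2
  have ho14x28 : ⟪emb e h3 ((1 : ℝ) * Real.sqrt 2) (1 : ℝ) (1 : ℝ), emb e h3 ((-1 : ℝ) * Real.sqrt 2) (-1 : ℝ) (3 : ℝ)⟫_ℂ = 0 := by
    rw [emb_inner, Complex.ofReal_eq_zero]
    linear_combination (-1 : ℝ) * h2
  have ho15x16 : ⟪emb e h3 ((1 : ℝ) * Real.sqrt 2) (1 : ℝ) (-1 : ℝ), emb e h3 ((1 : ℝ) * Real.sqrt 2) (-1 : ℝ) (1 : ℝ)⟫_ℂ = 0 := by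
    rw [emb_inner, Complex.ofReal_eq_zero]
    linear_combination (1 : ℝ) * h2
  have ho15x21 : ⟪emb e h3 ((1 : ℝ) * Real.sqrt 2) (1 : ℝ) (-1 : ℝ), emb e h3 ((-1 : ℝ) * Real.sqrt 2) (3 : ℝ) (1 : ℝ)⟫_ℂ = 0 := by
    rw [emb_inner, Complex.ofReal_eq_zero]
    linear_combination (-1 : ℝ) * h2
  have ho15x29 : ⟪emb e h3 ((1 : ℝ) * Real.sqrt 2) (1 : ℝ) (-1 : ℝ), emb e h3 ((1 : ℝ) * Real.sqrt 2) (1 : ℝ) (3 : ℝ)⟫_ℂ = 0 := by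
    rw [emb_inner, Complex.ofReal_eq_zero]
    linear_combination (1 : ℝ) * h2
  have ho16x24 : ⟪emb e h3 ((1 : ℝ) * Real.sqrt 2) (-1 : ℝ) (1 : ℝ), emb e h3 ((-1 : ℝ) * Real.sqrt 2) (-3 : ℝ) (-1 : ℝ)⟫_ℂ = 0 := by
    rw [emb_inner, Complex.ofReal_eq_zero]
    linear_combination (-1 : ℝ) * h2
  have ho16x25 : ⟪emb e h3 ((1 : ℝ) * Real.sqrt 2) (-1 : ℝ) (1 : ℝ), emb e h3 ((1 : ℝ) * Real.sqrt 2) (-1 : ℝ) (-3 : ℝ)⟫_ℂ = 0 := by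
    rw [emb_inner, Complex.ofReal_eq_zero]
    linear_combination (1 : ℝ) * h2
  have ho17x22 : ⟪emb e h3 ((1 : ℝ) * Real.sqrt 2) (-1 : ℝ) (-1 : ℝ), emb e h3 ((1 : ℝ) * Real.sqrt 2) (3 : ℝ) (-1 : ℝ)⟫_ℂ = 0 := by
    rw [emb_inner, Complex.ofReal_eq_zero]
    linear_combination (1 : ℝ) * h2
  have ho17x26 : ⟪emb e h3 ((1 : ℝ) * Real.sqrt 2) (-1 : ℝ) (-1 : ℝ), emb e h3 ((-1 : ℝ) * Real.sqrt 2) (1 : ℝ) (-3 : ℝ)⟫_ℂ = 0 := by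
    rw [emb_inner, Complex.ofReal_eq_zero]
    linear_combination (-1 : ℝ) * h2
  have ho18x22 : ⟪emb e h3 ((-2 : ℝ) * Real.sqrt 2) (1 : ℝ) (-1 : ℝ), emb e h3 ((1 : ℝ) * Real.sqrt 2) (3 : ℝ) (-1 : ℝ)⟫_ℂ = 0 := by
    rw [emb_inner, Complex.ofReal_eq_zero]
    linear_combination (-2 : ℝ) * h2
  have ho18x33 : ⟪emb e h3 ((-2 : ℝ) * Real.sqrt 2) (1 : ℝ) (-1 : ℝ), emb e h3 (2 : ℝ) ((-3 : ℝ) * Real.sqrt 2) ((-7 : ℝ) * Real.sqrt 2)⟫_ℂ = 0 := by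
    rw [emb_inner, Complex.ofReal_eq_zero]
    linear_combination (0 : ℝ) * h2
  have ho19x26 : ⟪emb e h3 ((2 : ℝ) * Real.sqrt 2) (1 : ℝ) (-1 : ℝ), emb e h3 ((-1 : ℝ) * Real.sqrt 2) (1 : ℝ) (-3 : ℝ)⟫_ℂ = 0 := by
    rw [emb_inner, Complex.ofReal_eq_zero]
    linear_combination (-2 : ℝ) * h2
  have ho19x34 : ⟪emb e h3 ((2 : ℝ) * Real.sqrt 2) (1 : ℝ) (-1 : ℝ), emb e h3 (-2 : ℝ) ((7 : ℝ) * Real.sqrt 2) ((3 : ℝ) * Real.sqrt 2)⟫_ℂ = 0 := by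
    rw [emb_inner, Complex.ofReal_eq_zero]
    linear_combination (0 : ℝ) * h2
  have ho20x21 : ⟪emb e h3 ((-2 : ℝ) * Real.sqrt 2) (-1 : ℝ) (-1 : ℝ), emb e h3 ((-1 : ℝ) * Real.sqrt 2) (3 : ℝ) (1 : ℝ)⟫_ℂ = 0 := by
    rw [emb_inner, Complex.ofReal_eq_zero]
    linear_combination (2 : ℝ) * h2
  have ho20x25 : ⟪emb e h3 ((-2 : ℝ) * Real.sqrt 2) (-1 : ℝ) (-1 : ℝ), emb e h3 ((1 : ℝ) * Real.sqrt 2) (-1 : ℝ) (-3 : ℝ)⟫_ℂ = 0 := by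
    rw [emb_inner, Complex.ofReal_eq_zero]
    linear_combination (-2 : ℝ) * h2
  have ho20x35 : ⟪emb e h3 ((-2 : ℝ) * Real.sqrt 2) (-1 : ℝ) (-1 : ℝ), emb e h3 (2 : ℝ) ((3 : ℝ) * Real.sqrt 2) ((-7 : ℝ) * Real.sqrt 2)⟫_ℂ = 0 := by
    rw [emb_inner, Complex.ofReal_eq_zero]
    linear_combination (0 : ℝ) * h2
  have ho20x36 : ⟪emb e h3 ((-2 : ℝ) * Real.sqrt 2) (-1 : ℝ) (-1 : ℝ), emb e h3 (2 : ℝ) ((-7 : ℝ) * Real.sqrt 2) ((3 : ℝ) * Real.sqrt 2)⟫_ℂ = 0 := by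
    rw [emb_inner, Complex.ofReal_eq_zero]
    linear_combination (0 : ℝ) * h2
  have ho21x35 : ⟪emb e h3 ((-1 : ℝ) * Real.sqrt 2) (3 : ℝ) (1 : ℝ), emb e h3 (2 : ℝ) ((3 : ℝ) * Real.sqrt 2) ((-7 : ℝ) * Real.sqrt 2)⟫_ℂ = 0 := by
    rw [emb_inner, Complex.ofReal_eq_zero]
    linear_combination (0 : ℝ) * h2
  have ho22x33 : ⟪emb e h3 ((1 : ℝ) * Real.sqrt 2) (3 : ℝ) (-1 : ℝ), emb e h3 (2 : ℝ) ((-3 : ℝ) * Real.sqrt 2) ((-7 : ℝ) * Real.sqrt 2)⟫_ℂ = 0 := by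
    rw [emb_inner, Complex.ofReal_eq_zero]
    linear_combination (0 : ℝ) * h2
  have ho25x36 : ⟪emb e h3 ((1 : ℝ) * Real.sqrt 2) (-1 : ℝ) (-3 : ℝ), emb e h3 (2 : ℝ) ((-7 : ℝ) * Real.sqrt 2) ((3 : ℝ) * Real.sqrt 2)⟫_ℂ = 0 := by
    rw [emb_inner, Complex.ofReal_eq_zero]
    linear_combination (0 : ℝ) * h2
  have ho26x34 : ⟪emb e h3 ((-1 : ℝ) * Real.sqrt 2) (1 : ℝ) (-3 : ℝ), emb e h3 (-2 : ℝ) ((7 : ℝ) * Real.sqrt 2) ((3 : ℝ) * Real.sqrt 2)⟫_ℂ = 0 := by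
    rw [emb_inner, Complex.ofReal_eq_zero]
    linear_combination (0 : ℝ) * h2
  have T0 := triple_rule w hres rfl h3 e htail _ _ _ hne0 hne1 hne4 ho0x1 ho0x4 ho1x4 (emb_tail e h3 _ _ _) (emb_tail e h3 _ _ _) (emb_tail e h3 _ _ _)
  have T1 := triple_rule w hres rfl h3 e htail _ _ _ hne0 hne9 hne13 ho0x9 ho0x13 ho9x13 (emb_tail e h3 _ _ _) (emb_tail e h3 _ _ _) (emb_tail e h3 _ _ _)
  have T2 := triple_rule w hres rfl h3 e htail _ _ _ hne1 hne6 hne12 ho1x6 ho1x12 ho6x12 (emb_tail e h3 _ _ _) (emb_tail e h3 _ _ _) (emb_tail e h3 _ _ _)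
  have T3 := triple_rule w hres rfl h3 e htail _ _ _ hne2 hne3 hne4 ho2x3 ho2x4 ho3x4 (emb_tail e h3 _ _ _) (emb_tail e h3 _ _ _) (emb_tail e h3 _ _ _)
  have T4 := triple_rule w hres rfl h3 e htail _ _ _ hne2 hne8 hne18 ho2x8 ho2x18 ho8x18 (emb_tail e h3 _ _ _) (emb_tail e h3 _ _ _) (emb_tail e h3 _ _ _)
  have T5 := triple_rule w hres rfl h3 e htail _ _ _ hne2 hne10 hne19 ho2x10 ho2x19 ho10x19 (emb_tail e h3 _ _ _) (emb_tail e h3 _ _ _) (emb_tail e h3 _ _ _)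
  have T6 := triple_rule w hres rfl h3 e htail _ _ _ hne2 hne15 hne16 ho2x15 ho2x16 ho15x16 (emb_tail e h3 _ _ _) (emb_tail e h3 _ _ _) (emb_tail e h3 _ _ _)
  have T7 := triple_rule w hres rfl h3 e htail _ _ _ hne3 hne11 hne20 ho3x11 ho3x20 ho11x20 (emb_tail e h3 _ _ _) (emb_tail e h3 _ _ _) (emb_tail e h3 _ _ _)
  have T8 := triple_rule w hres rfl h3 e htail _ _ _ hne3 hne14 hne17 ho3x14 ho3x17 ho14x17 (emb_tail e h3 _ _ _) (emb_tail e h3 _ _ _) (emb_tail e h3 _ _ _)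
  have T9 := triple_rule w hres rfl h3 e htail _ _ _ hne5 hne15 hne21 ho5x15 ho5x21 ho15x21 (emb_tail e h3 _ _ _) (emb_tail e h3 _ _ _) (emb_tail e h3 _ _ _)
  have T10 := triple_rule w hres rfl h3 e htail _ _ _ hne5 hne17 hne22 ho5x17 ho5x22 ho17x22 (emb_tail e h3 _ _ _) (emb_tail e h3 _ _ _) (emb_tail e h3 _ _ _)
  have T11 := triple_rule w hres rfl h3 e htail _ _ _ hne6 hne14 hne23 ho6x14 ho6x23 ho14x23 (emb_tail e h3 _ _ _) (emb_tail e h3 _ _ _) (emb_tail e h3 _ _ _)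
  have T12 := triple_rule w hres rfl h3 e htail _ _ _ hne6 hne16 hne24 ho6x16 ho6x24 ho16x24 (emb_tail e h3 _ _ _) (emb_tail e h3 _ _ _) (emb_tail e h3 _ _ _)
  have T13 := triple_rule w hres rfl h3 e htail _ _ _ hne7 hne16 hne25 ho7x16 ho7x25 ho16x25 (emb_tail e h3 _ _ _) (emb_tail e h3 _ _ _) (emb_tail e h3 _ _ _)
  have T14 := triple_rule w hres rfl h3 e htail _ _ _ hne7 hne17 hne26 ho7x17 ho7x26 ho17x26 (emb_tail e h3 _ _ _) (emb_tail e h3 _ _ _) (emb_tail e h3 _ _ _)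
  have T15 := triple_rule w hres rfl h3 e htail _ _ _ hne8 hne12 hne27 ho8x12 ho8x27 ho12x27 (emb_tail e h3 _ _ _) (emb_tail e h3 _ _ _) (emb_tail e h3 _ _ _)
  have T16 := triple_rule w hres rfl h3 e htail _ _ _ hne9 hne14 hne28 ho9x14 ho9x28 ho14x28 (emb_tail e h3 _ _ _) (emb_tail e h3 _ _ _) (emb_tail e h3 _ _ _)
  have T17 := triple_rule w hres rfl h3 e htail _ _ _ hne9 hne15 hne29 ho9x15 ho9x29 ho15x29 (emb_tail e h3 _ _ _) (emb_tail e h3 _ _ _) (emb_tail e h3 _ _ _)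
  have T18 := triple_rule w hres rfl h3 e htail _ _ _ hne10 hne13 hne30 ho10x13 ho10x30 ho13x30 (emb_tail e h3 _ _ _) (emb_tail e h3 _ _ _) (emb_tail e h3 _ _ _)
  have T19 := triple_rule w hres rfl h3 e htail _ _ _ hne11 hne12 hne31 ho11x12 ho11x31 ho12x31 (emb_tail e h3 _ _ _) (emb_tail e h3 _ _ _) (emb_tail e h3 _ _ _)
  have T20 := triple_rule w hres rfl h3 e htail _ _ _ hne11 hne13 hne32 ho11x13 ho11x32 ho13x32 (emb_tail e h3 _ _ _) (emb_tail e h3 _ _ _) (emb_tail e h3 _ _ _)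
  have T21 := triple_rule w hres rfl h3 e htail _ _ _ hne18 hne22 hne33 ho18x22 ho18x33 ho22x33 (emb_tail e h3 _ _ _) (emb_tail e h3 _ _ _) (emb_tail e h3 _ _ _)
  have T22 := triple_rule w hres rfl h3 e htail _ _ _ hne19 hne26 hne34 ho19x26 ho19x34 ho26x34 (emb_tail e h3 _ _ _) (emb_tail e h3 _ _ _) (emb_tail e h3 _ _ _)
  have T23 := triple_rule w hres rfl h3 e htail _ _ _ hne20 hne21 hne35 ho20x21 ho20x35 ho21x35 (emb_tail e h3 _ _ _) (emb_tail e h3 _ _ _) (emb_tail e h3 _ _ _)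
  have T24 := triple_rule w hres rfl h3 e htail _ _ _ hne20 hne25 hne36 ho20x25 ho20x36 ho25x36 (emb_tail e h3 _ _ _) (emb_tail e h3 _ _ _) (emb_tail e h3 _ _ _)
  exact ksCore (w (pr (nv (emb e h3 (0 : ℝ) (0 : ℝ) (1 : ℝ)))) = 1) (w (pr (nv (emb e h3 (0 : ℝ) (1 : ℝ) (0 : ℝ)))) = 1) (w (pr (nv (emb e h3 (0 : ℝ) (1 : ℝ) (1 : ℝ)))) = 1) (w (pr (nv (emb e h3 (0 : ℝ) (1 : ℝ) (-1 : ℝ)))) = 1) (w (pr (nv (emb e h3 (1 : ℝ) (0 : ℝ) (0 : ℝ)))) = 1) (w (pr (nv (emb e h3 (1 : ℝ) (0 : ℝ) ((1 : ℝ) * Real.sqrt 2)))) = 1) (w (pr (nv (emb e h3 (1 : ℝ) (0 : ℝ) ((-1 : ℝ) * Real.sqrt 2)))) = 1) (w (pr (nv (emb e h3 (1 : ℝ) ((1 : ℝ) * Real.sqrt 2) (0 : ℝ)))) = 1) (w (pr (nv (emb e h3 (1 : ℝ) ((1 : ℝ) * Real.sqrt 2) ((-1 : ℝ) * Real.sqrt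 2)))) = 1) (w (pr (nv (emb e h3 (1 : ℝ) ((-1 : ℝ) * Real.sqrt 2) (0 : ℝ)))) = 1) (w (pr (nv (emb e h3 (1 : ℝ) ((-1 : ℝ) * Real.sqrt 2) ((1 : ℝ) * Real.sqrt 2)))) = 1) (w (pr (nv (emb e h3 (1 : ℝ) ((-1 : ℝ) * Real.sqrt 2) ((-1 : ℝ) * Real.sqrt 2)))) = 1) (w (pr (nv (emb e h3 ((1 : ℝ) * Real.sqrt 2) (0 : ℝ) (1 : ℝ)))) = 1) (w (pr (nv (emb e h3 ((1 : ℝ) * Real.sqrt 2) (1 : ℝ) (0 : ℝ)))) = 1) (w (pr (nv (emb e h3 ((1 : ℝ) * Real.sqrt 2) (1 : ℝ) (1 : ℝ)))) = 1) (w (pr (nv (emb e h3 ((1 : ℝ) * Real.sqrt 2) (1 : ℝ) (-1 : ℝ)))) = 1) (w (pr (nv (emb e h3 ((1 : ℝ) * Real.sqrt 2) (-1 : ℝ) (1 : ℝ)))) = 1) (w (pr (nv (emb e h3 ((1 : ℝ) * Real.sqrt 2) (-1 : ℝ) (-1 : ℝ)))) = 1) (w (pr (nv (emb e h3 ((-2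 : ℝ) * Real.sqrt 2) (1 : ℝ) (-1 : ℝ)))) = 1) (w (pr (nv (emb e h3 ((2 : ℝ) * Real.sqrt 2) (1 : ℝ) (-1 : ℝ)))) = 1) (w (pr (nv (emb e h3 ((-2 : ℝ) * Real.sqrt 2) (-1 : ℝ) (-1 : ℝ)))) = 1) (w (pr (nv (emb e h3 ((-1 : ℝ) * Real.sqrt 2) (3 : ℝ) (1 : ℝ)))) = 1) (w (pr (nv (emb e h3 ((1 : ℝ) * Real.sqrt 2) (3 : ℝ) (-1 : ℝ)))) = 1) (w (pr (nv (emb e h3 ((1 : ℝ) * Real.sqrt 2) (-3 : ℝ) (1 : ℝ)))) = 1) (w (pr (nv (emb e h3 ((-1 : ℝ) * Real.sqrt 2) (-3 : ℝ) (-1 : ℝ)))) = 1) (w (pr (nv (emb e h3 ((1 : ℝ) * Real.sqrt 2) (-1 : ℝ) (-3 : ℝ)))) = 1) (w (pr (nv (emb e h3 ((-1 : ℝ) * Real.sqrt 2) (1 : ℝ) (-3 : ℝ)))) = 1) (w (pr (nv (emb e h3 ((1 : ℝ) * Real.sqrt 2) (-3 : ℝ) (-2 : ℝ)))) = 1) (w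 (pr (nv (emb e h3 ((-1 : ℝ) * Real.sqrt 2) (-1 : ℝ) (3 : ℝ)))) = 1) (w (pr (nv (emb e h3 ((1 : ℝ) * Real.sqrt 2) (1 : ℝ) (3 : ℝ)))) = 1) (w (pr (nv (emb e h3 ((-1 : ℝ) * Real.sqrt 2) (2 : ℝ) (3 : ℝ)))) = 1) (w (pr (nv (emb e h3 ((-1 : ℝ) * Real.sqrt 2) (-3 : ℝ) (2 : ℝ)))) = 1) (w (pr (nv (emb e h3 ((1 : ℝ) * Real.sqrt 2) (-2 : ℝ) (3 : ℝ)))) = 1) (w (pr (nv (emb e h3 (2 : ℝ) ((-3 : ℝ) * Real.sqrt 2) ((-7 : ℝ) * Real.sqrt 2)))) = 1) (w (pr (nv (emb e h3 (-2 : ℝ) ((7 : ℝ) * Real.sqrt 2) ((3 : ℝ) * Real.sqrt 2)))) = 1) (w (pr (nv (emb e h3 (2 : ℝ) ((3 : ℝ) * Real.sqrt 2) ((-7 : ℝ) * Real.sqrt 2)))) = 1) (w (pr (nv (emb e h3 (2 : ℝ) ((-7 : ℝ) * Real.sqrt 2) ((3 : ℝ) * Real.sqrt 2)))) = 1)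
    hpin T0 T1 T2 T3 T4 T5 T6 T7 T8 T9 T10 T11 T12 T13 T14 T15 T16 T17 T18 T19 T20 T21 T22 T23 T24
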